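/- Define a sequence of positive integers by w_0 ≥ 1 and the recursion w_{m+1} ≥ w_m + w_m/(120·log(e·w_m)) for all m ≥ 0. Then w_m ≥ e^{√(m/68)} for all m ≥ 1. -/

import Mathlib

open Real

lemma aux_log_ge_one_sub_inv {t : ℝ} (ht : 0 < t) : 1 - 1/t ≤ Real.log t := by
  have h := Real.add_one_le_exp (-Real.log t)
  rw [Real.exp_neg, Real.exp_log ht] at h
  rw [one_div]
  linarith

lemma aux_logLB (k : ℕ) (y : ℝ) (hy : 0 < y) :
    (k:ℝ) * Real.log 2 + (1 - 2^k / y) ≤ Real.log y := by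
  have h2 : (0:ℝ) < 2^k := by positivity
  have hq : (0:ℝ) < y / 2^k := by positivity
  have h1 := aux_log_ge_one_sub_inv hq
  have e1 : Real.log (y / 2^k) = Real.log y - (k:ℝ) * Real.log 2 := by
    rw [Real.log_div (ne_of_gt hy) (ne_of_gt h2), Real.log_pow]
  have e2 : 1 / (y / 2^k) = 2^k / y := by
    field_simp
  rw [e1, e2] at h1
  linarith

lemma aux_cover (w : ℕ → ℕ) (hlin : ∀ k : ℕ, k + 1 ≤ w k) (m a : ℕ) (hma : a ≤ m)
    (hb : (m:ℝ)/68 ≤ (Real.log ((a:ℝ)+1))^2) :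
    Real.exp (Real.sqrt ((m:ℝ) / 68)) ≤ (w m : ℝ) := by
  have hla : 0 ≤ Real.log ((a:ℝ)+1) := Real.log_nonneg (by push_cast; linarith [Nat.cast_nonneg (α := ℝ) a])
  have hs : Real.sqrt ((m:ℝ)/68) ≤ Real.log ((a:ℝ)+1) := by
    calc Real.sqrt ((m:ℝ)/68) ≤ Real.sqrt ((Real.log ((a:ℝ)+1))^2) := Real.sqrt_le_sqrt hb
      _ = Real.log ((a:ℝ)+1) := Real.sqrt_sq hla
  have hw : ((a:ℝ)+1) ≤ (w m : ℝ) := by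
    have h1 := hlin m
    have : (m:ℝ) + 1 ≤ (w m : ℝ) := by exact_mod_cast h1
    have : (a:ℝ) ≤ (m:ℝ) := by exact_mod_cast hma
    linarith [(show (m:ℝ) + 1 ≤ (w m : ℝ) by exact_mod_cast h1)]
  calc Real.exp (Real.sqrt ((m:ℝ)/68)) ≤ Real.exp (Real.log ((a:ℝ)+1)) := Real.exp_le_exp.mpr hs
    _ = (a:ℝ)+1 := Real.exp_log (by positivity)
    _ ≤ (w m : ℝ) := hw

theorem stmt7 (w : ℕ → ℕ) (h0 : 1 ≤ w 0)
    (hrec : ∀ m : ℕ, (w m : ℝ) + (w m : ℝ) / (120 * Real.log (Real.exp 1 * (w m : ℝ)))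
      ≤ (w (m + 1) : ℝ)) :
    ∀ m : ℕ, 1 ≤ m → Real.exp (Real.sqrt (m / 68)) ≤ (w m : ℝ) := by
  have l2 := Real.log_two_gt_d9
  -- w m ≥ m + 1
  have hlin : ∀ m : ℕ, m + 1 ≤ w m := by
    intro m
    induction m with
    | zero => simpa using h0
    | succ n ih =>
      have hW : (1:ℝ) ≤ (w n : ℝ) := by exact_mod_cast le_trans (by omega) ih
      have hWpos : (0:ℝ) < (w n : ℝ) := lt_of_lt_of_le one_pos hW
      have hlog : Real.log (Real.exp 1 * (w n : ℝ)) = 1 + Real.log (w n : ℝ) := by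
        rw [Real.log_mul (Real.exp_ne_zero 1) (ne_of_gt hWpos), Real.log_exp]
      have hlognn : 0 ≤ Real.log (w n : ℝ) := Real.log_nonneg hW
      have hden : (0:ℝ) < 120 * Real.log (Real.exp 1 * (w n : ℝ)) := by
        rw [hlog]; linarith
      have hterm : 0 < (w n : ℝ) / (120 * Real.log (Real.exp 1 * (w n : ℝ))) :=
        div_pos hWpos hden
      have h := hrec n
      have : (w n : ℝ) < (w (n+1) : ℝ) := by linarith
      have hlt : w n < w (n+1) := by exact_mod_cast this
      omega
  -- key induction for m ≥ 2000
  have h2001 : (121:ℝ)/16 ≤ Real.log 2001 := by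
    have h := aux_logLB 11 2001 (by norm_num)
    norm_num at h
    nlinarith
  have key : ∀ n : ℕ, ((2000 + n : ℕ):ℝ)/68 ≤ (Real.log ((w (2000 + n) : ℕ) : ℝ))^2 := by
    intro n
    induction n with
    | zero =>
      have hw : (2001:ℝ) ≤ (w 2000 : ℝ) := by exact_mod_cast hlin 2000
      have hL : (121:ℝ)/16 ≤ Real.log (w 2000 : ℝ) :=
        le_trans h2001 (Real.log_le_log (by norm_num) hw)
      norm_num
      nlinarith
    | succ n ih =>
      set m := 2000 + n with hm
      have hw : (2001:ℝ) ≤ (w m : ℝ) := by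
        have := hlin m
        have : ((m:ℕ):ℝ) + 1 ≤ (w m : ℝ) := by exact_mod_cast this
        have hm' : (2000:ℝ) ≤ ((m:ℕ):ℝ) := by exact_mod_cast Nat.le_add_right 2000 n
        linarith
      have hWpos : (0:ℝ) < (w m : ℝ) := by linarith
      set L := Real.log ((w m : ℕ) : ℝ) with hLdef
      have hL : (121:ℝ)/16 ≤ L :=
        le_trans h2001 (Real.log_le_log (by norm_num) hw)
      have hlog : Real.log (Real.exp 1 * (w m : ℝ)) = 1 + L := by
        rw [hLdef, Real.log_mul (Real.exp_ne_zero 1) (ne_of_gt hWpos), Real.log_exp]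
      have hden : (0:ℝ) < 120 * (1 + L) := by linarith
      have h := hrec m
      rw [hlog] at h
      -- w (m+1) ≥ w m * (1 + 1/(120*(1+L)))
      have hfac : (w m : ℝ) + (w m : ℝ) / (120 * (1 + L))
          = (w m : ℝ) * (1 + 1/(120*(1+L))) := by
        field_simp
      rw [hfac] at h
      have hcpos : (0:ℝ) < 1 + 1/(120*(1+L)) := by positivity
      have hWc : (0:ℝ) < (w m : ℝ) * (1 + 1/(120*(1+L))) := mul_pos hWpos hcpos
      have hW1pos : (0:ℝ) < (w (m+1) : ℝ) := lt_of_lt_of_le hWc h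
      have hlog1 : Real.log ((w m : ℝ) * (1 + 1/(120*(1+L)))) ≤ Real.log (w (m+1) : ℝ) :=
        Real.log_le_log hWc h
      rw [Real.log_mul (ne_of_gt hWpos) (ne_of_gt hcpos), ← hLdef] at hlog1
      have hd2 : (0:ℝ) < 121 + 120*L := by linarith
      -- log (1 + x) ≥ 1/(121+120L)
      have hlc : (1:ℝ)/(121 + 120*L) ≤ Real.log (1 + 1/(120*(1+L))) := by
        have h1 := aux_log_ge_one_sub_inv hcpos
        have e : 1 - 1/(1 + 1/(120*(1+L))) = 1/(121 + 120*L) := by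
          have hne1 : (120*(1+L)) ≠ 0 := ne_of_gt hden
          have hne2 : (121 + 120*L) ≠ 0 := ne_of_gt hd2
          have hne3 : (1 + 1/(120*(1+L))) ≠ 0 := ne_of_gt hcpos
          field_simp
          ring
        rw [e] at h1
        exact h1
      set e := (1:ℝ)/(121 + 120*L) with hedef
      have hepos : 0 < e := by positivity
      have hLe : L + e ≤ Real.log (w (m+1) : ℝ) := by linarith
      have hLenn : 0 ≤ L + e := by linarith
      have hsq : (L + e)^2 ≤ (Real.log (w (m+1) : ℝ))^2 := by
        have := pow_le_pow_left₀ hLenn hLe 2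
        exact this
      have hinc : (1:ℝ)/68 ≤ 2*L*e := by
        rw [hedef]
        rw [show 2*L*(1/(121+120*L)) = 2*L/(121+120*L) by ring]
        rw [div_le_div_iff₀ (by norm_num) hd2]
        linarith
      have hstep : L^2 + 1/68 ≤ (Real.log (w (m+1) : ℝ))^2 := by
        nlinarith [sq_nonneg e]
      have hcast : ((2000 + (n+1) : ℕ):ℝ) = ((2000 + n : ℕ):ℝ) + 1 := by push_cast; ring
      rw [show 2000 + (n+1) = (2000 + n) + 1 by ring] at *
      calc (((2000+n) + 1 : ℕ):ℝ)/68 = ((2000 + n : ℕ):ℝ)/68 + 1/68 := by push_cast; ring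
        _ ≤ L^2 + 1/68 := by linarith [ih]
        _ ≤ (Real.log (w ((2000+n) + 1) : ℝ))^2 := hstep
  intro m hm
  rcases le_or_gt m 30 with h30 | h30
  · refine aux_cover w hlin m 1 hm ?_
    have : ((m:ℕ):ℝ) ≤ 30 := by exact_mod_cast h30
    have : ((1:ℕ):ℝ) + 1 = 2 := by norm_num
    rw [this]
    nlinarith [l2, (show ((m:ℕ):ℝ) ≤ 30 by exact_mod_cast h30)]
  · rcases le_or_gt m 790 with h790 | h790
    · refine aux_cover w hlin m 30 (by omega) ?_
      have hmr : ((m:ℕ):ℝ) ≤ 790 := by exact_mod_cast h790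
      have h31 : (3.4334:ℝ) ≤ Real.log (((30:ℕ):ℝ) + 1) := by
        have h := aux_logLB 5 31 (by norm_num)
        norm_num at h ⊢
        nlinarith
      nlinarith
    · rcases le_or_gt m 2000 with h2000 | h2000
      · refine aux_cover w hlin m 790 (by omega) ?_
        have hmr : ((m:ℕ):ℝ) ≤ 2000 := by exact_mod_cast h2000
        have h791 : (6.59:ℝ) ≤ Real.log (((790:ℕ):ℝ) + 1) := by
          have h := aux_logLB 9 791 (by norm_num)
          norm_num at h ⊢
          nlinarith
        nlinarith
      · obtain ⟨n, rfl⟩ : ∃ n, m = 2000 + n := ⟨m - 2000, by omega⟩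
        have hk := key n
        have hWpos : (0:ℝ) < (w (2000+n) : ℝ) := by
          have := hlin (2000+n)
          have h' : ((2000+n : ℕ):ℝ) + 1 ≤ (w (2000+n) : ℝ) := by exact_mod_cast this
          have h'' : (0:ℝ) ≤ ((2000+n:ℕ):ℝ) := Nat.cast_nonneg _
          linarith
        have hLnn : 0 ≤ Real.log ((w (2000+n) : ℕ):ℝ) := by
          apply Real.log_nonneg
          have := hlin (2000+n)
          have h' : ((2000+n:ℕ):ℝ) + 1 ≤ (w (2000+n) : ℝ) := by exact_mod_cast this
          have : (0:ℝ) ≤ ((2000+n:ℕ):ℝ) := Nat.cast_nonneg _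
          linarith
        have hs : Real.sqrt (((2000+n:ℕ):ℝ)/68) ≤ Real.log ((w (2000+n):ℕ):ℝ) := by
          calc Real.sqrt (((2000+n:ℕ):ℝ)/68) ≤ Real.sqrt ((Real.log ((w (2000+n):ℕ):ℝ))^2) :=
                Real.sqrt_le_sqrt hk
            _ = _ := Real.sqrt_sq hLnn
        calc Real.exp (Real.sqrt (((2000+n:ℕ):ℝ)/68)) ≤ Real.exp (Real.log ((w (2000+n):ℕ):ℝ)) :=
              Real.exp_le_exp.mpr hs
          _ = _ := Real.exp_log hWpos
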